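/- For every n ≥ 3, the number of minimal Roman dominating functions of the path P_n satisfies C_{P,n} = C_{P,2̄,n} + C_{P,2̄,n−2}. -/

import Mathlib

/-- A Roman dominating function: every vertex with value 0 has a neighbor with value 2. -/
def IsRDF {V : Type*} (G : SimpleGraph V) (f : V → Fin 3) : Prop :=
  ∀ v, f v = 0 → ∃ u, G.Adj v u ∧ f u = 2

/-- A minimal Roman dominating function: an rdf such that no rdf `g ≠ f` satisfies `g ≤ f`. -/
def IsMinimalRDF {V : Type*} (G : SimpleGraph V) (f : V → Fin 3) : Prop :=
  IsRDF G f ∧ ∀ g : V → Fin 3, IsRDF G g → g ≤ f → g = f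

/-- The number of minimal Roman dominating functions of `G`. -/
noncomputable def numMinRDF {V : Type*} (G : SimpleGraph V) : ℕ :=
  {f : V → Fin 3 | IsMinimalRDF G f}.ncard

/-- `C_{P,n}`: the number of minimal Roman dominating functions of the path `Pₙ`. -/
noncomputable def CP (n : ℕ) : ℕ := numMinRDF (SimpleGraph.pathGraph n)

/-- `C_{P,2,n}`: the number of minimal rdf `f` of `Pₙ` with `f(v₁) = 2`. -/
noncomputable def CP2 (n : ℕ) : ℕ :=
  {f : Fin n → Fin 3 | IsMinimalRDF (SimpleGraph.pathGraph n) f ∧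
    ∃ h : 0 < n, f ⟨0, h⟩ = 2}.ncard

/-- `C_{P,2̄,n}`: the number of minimal rdf `f` of `Pₙ` with `f(v₁) ≠ 2`. -/
noncomputable def CPbar2 (n : ℕ) : ℕ :=
  {f : Fin n → Fin 3 | IsMinimalRDF (SimpleGraph.pathGraph n) f ∧
    ∀ h : 0 < n, f ⟨0, h⟩ ≠ 2}.ncard

open SimpleGraph

namespace CPaux

/-- Restriction of a function on `P_{m+3}` to the last `m+1` vertices. -/
def resf (m : ℕ) (f : Fin (m+3) → Fin 3) (j : Fin (m+1)) : Fin 3 :=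
  f ⟨j.val + 2, by have := j.isLt; omega⟩

/-- Extension of a function on `P_{m+1}` by prepending values `2, 0`. -/
def extf (m : ℕ) (g : Fin (m+1) → Fin 3) (i : Fin (m+3)) : Fin 3 :=
  if i.val = 0 then 2 else if i.val = 1 then 0 else
    g ⟨i.val - 2, by have := i.isLt; omega⟩

lemma extf_zero (m : ℕ) (g : Fin (m+1) → Fin 3) : extf m g ⟨0, by omega⟩ = 2 := rfl

lemma extf_one (m : ℕ) (g : Fin (m+1) → Fin 3) : extf m g ⟨1, by omega⟩ = 0 := rfl

lemma extf_two (m : ℕ) (g : Fin (m+1) → Fin 3) {i : Fin (m+3)} (hi : 2 ≤ i.val) :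
    extf m g i = g ⟨i.val - 2, by have := i.isLt; omega⟩ := by
  unfold extf
  rw [if_neg (by omega), if_neg (by omega)]

lemma resf_extf (m : ℕ) (g : Fin (m+1) → Fin 3) : resf m (extf m g) = g := by
  funext j
  rw [resf, extf_two m g (by simp)]
  congr 1

lemma fin3_cases (a : Fin 3) : a = 0 ∨ a = 1 ∨ a = 2 := by
  revert a; decide

lemma adj_iff {n : ℕ} {u v : Fin n} :
    (pathGraph n).Adj u v ↔ u.val + 1 = v.val ∨ v.val + 1 = u.val :=
  SimpleGraph.pathGraph_adj

/-- If `f` is a minimal rdf on `P_{m+3}` with `f v₁ = 2`, then `f v₂ = 0` and `f v₃ ≠ 2`. -/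
lemma step1 {m : ℕ} {f : Fin (m+3) → Fin 3}
    (hf : IsMinimalRDF (pathGraph (m+3)) f) (h0 : f ⟨0, by omega⟩ = 2) :
    f ⟨1, by omega⟩ = 0 ∧ f ⟨2, by omega⟩ ≠ 2 := by
  by_contra h
  push_neg at h
  have hne : Function.update f ⟨0, by omega⟩ 1 ⟨0, by omega⟩ = 1 :=
    Function.update_self _ _ _
  have hrdf : IsRDF (pathGraph (m+3)) (Function.update f ⟨0, by omega⟩ 1) := by
    intro v hv
    have hv0 : v ≠ ⟨0, by omega⟩ := by
      intro hveq
      rw [hveq, hne] at hv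
      exact absurd hv (by decide)
    have hfv : f v = 0 := by rwa [Function.update_of_ne hv0] at hv
    obtain ⟨u, hadj, hu2⟩ := hf.1 v hfv
    by_cases hu0 : u = ⟨0, by omega⟩
    · rw [adj_iff] at hadj
      have hv1 : v = ⟨1, by omega⟩ := by
        apply Fin.ext
        rw [hu0] at hadj
        simp only [Fin.val_mk] at hadj ⊢
        omega
      have hf1 : f ⟨1, by omega⟩ = 0 := by rw [← hv1]; exact hfv
      have hf2 : f ⟨2, by omega⟩ = 2 := h hf1
      refine ⟨⟨2, by omega⟩, ?_, ?_⟩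
      · rw [adj_iff, hv1]; left; rfl
      · rw [Function.update_of_ne (by simp [Fin.ext_iff]), hf2]
    · exact ⟨u, hadj, by rwa [Function.update_of_ne hu0]⟩
  have hle : Function.update f ⟨0, by omega⟩ 1 ≤ f := by
    intro v
    by_cases hv0 : v = ⟨0, by omega⟩
    · rw [hv0, hne, h0]; show (1:Fin 3) ≤ 2; decide
    · rw [Function.update_of_ne hv0]
  have heq := congrFun (hf.2 _ hrdf hle) ⟨0, by omega⟩
  rw [hne, h0] at heq
  exact absurd heq (by decide)

/-- Extension preserves the rdf property. -/
lemma extf_rdf {m : ℕ} {g : Fin (m+1) → Fin 3} (hg : IsRDF (pathGraph (m+1)) g) :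
    IsRDF (pathGraph (m+3)) (extf m g) := by
  intro v hv
  rcases Nat.lt_or_ge v.val 2 with hlt | hge
  · interval_cases hv' : (v.val)
    · rw [show v = ⟨0, by omega⟩ from Fin.ext hv', extf_zero] at hv
      exact absurd hv (by decide)
    · refine ⟨⟨0, by omega⟩, ?_, extf_zero m g⟩
      rw [adj_iff]; right
      simp only [Fin.val_mk]
      omega
  · rw [extf_two m g hge] at hv
    obtain ⟨u, hadj, hu2⟩ := hg ⟨v.val - 2, by have := v.isLt; omega⟩ hv
    rw [adj_iff] at hadj
    refine ⟨⟨u.val + 2, by have := u.isLt; omega⟩, ?_, ?_⟩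
    · rw [adj_iff]
      simp only [Fin.val_mk] at hadj ⊢
      omega
    · rw [extf_two m g (by simp)]
      convert hu2 using 2
      exact Fin.ext (by simp)
  
/-- Core bijection, backward direction: extension is a minimal rdf. -/
lemma bwd {m : ℕ} {g : Fin (m+1) → Fin 3}
    (hg : IsMinimalRDF (pathGraph (m+1)) g) (h0 : g ⟨0, by omega⟩ ≠ 2) :
    IsMinimalRDF (pathGraph (m+3)) (extf m g) := by
  refine ⟨extf_rdf hg.1, ?_⟩
  intro f' hf' hle
  have hle1 : f' ⟨1, by omega⟩ = 0 := by
    have := hle ⟨1, by omega⟩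
    rw [extf_one] at this
    exact le_antisymm this (Fin.zero_le _)
  -- restriction of f' is an rdf on P_{m+1}
  have hres : IsRDF (pathGraph (m+1)) (resf m f') := by
    intro j hj
    obtain ⟨u, hadj, hu2⟩ := hf' ⟨j.val + 2, by have := j.isLt; omega⟩ hj
    rw [adj_iff] at hadj
    simp only [Fin.val_mk] at hadj
    have hu1 : u.val ≠ 1 := by
      intro h1
      rw [show u = ⟨1, by omega⟩ from Fin.ext h1, hle1] at hu2
      exact absurd hu2 (by decide)
    refine ⟨⟨u.val - 2, by have := u.isLt; omega⟩, ?_, ?_⟩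
    · rw [adj_iff]
      simp only [Fin.val_mk]
      omega
    · rw [resf]
      convert hu2 using 2
      simp only [Fin.ext_iff, Fin.val_mk]
      omega
  have hresle : resf m f' ≤ g := by
    intro j
    have := hle ⟨j.val + 2, by have := j.isLt; omega⟩
    rwa [extf_two m g (by simp), show (⟨j.val + 2 - 2, by have := j.isLt; omega⟩ : Fin (m+1)) = j from Fin.ext (by simp)] at this
  have hreseq : resf m f' = g := hg.2 _ hres hresle
  have hf'0 : f' ⟨0, by omega⟩ = 2 := by
    rcases fin3_cases (f' ⟨0, by omega⟩) with h | h | h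
    · obtain ⟨u, hadj, hu2⟩ := hf' ⟨0, by omega⟩ h
      rw [adj_iff] at hadj
      have : u = ⟨1, by omega⟩ := Fin.ext (by simp only [Fin.val_mk] at hadj ⊢; omega)
      rw [this, hle1] at hu2
      exact absurd hu2 (by decide)
    · obtain ⟨u, hadj, hu2⟩ := hf' ⟨1, by omega⟩ hle1
      rw [adj_iff] at hadj
      have : u.val = 0 ∨ u.val = 2 := by simp only [Fin.val_mk] at hadj; omega
      rcases this with h' | h'
      · rw [show u = ⟨0, by omega⟩ from Fin.ext h', h] at hu2
        exact absurd hu2 (by decide)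
      · have : f' ⟨2, by omega⟩ = g ⟨0, by omega⟩ := by
          have := congrFun hreseq ⟨0, by omega⟩
          rwa [resf] at this
        rw [show u = ⟨2, by omega⟩ from Fin.ext h', this] at hu2
        exact absurd hu2 h0
    · exact h
  funext i
  rcases Nat.lt_or_ge i.val 2 with hlt | hge
  · interval_cases hi : (i.val)
    · rw [show i = ⟨0, by omega⟩ from Fin.ext hi, extf_zero, hf'0]
    · rw [show i = ⟨1, by omega⟩ from Fin.ext hi, extf_one, hle1]
  · rw [extf_two m g hge]
    have := congrFun hreseq ⟨i.val - 2, by have := i.isLt; omega⟩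
    rw [resf] at this
    rw [← this]
    congr 1
    simp only [Fin.ext_iff]
    have := i.isLt
    omega

/-- Core bijection, forward direction. -/
lemma fwd {m : ℕ} {f : Fin (m+3) → Fin 3}
    (hf : IsMinimalRDF (pathGraph (m+3)) f) (h0 : f ⟨0, by omega⟩ = 2) :
    IsMinimalRDF (pathGraph (m+1)) (resf m f) ∧ resf m f ⟨0, by omega⟩ ≠ 2 ∧
      f = extf m (resf m f) := by
  obtain ⟨h1, h2⟩ := step1 hf h0
  have heq : f = extf m (resf m f) := by
    funext i
    rcases Nat.lt_or_ge i.val 2 with hlt | hge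
    · interval_cases hi : (i.val)
      · rw [show i = ⟨0, by omega⟩ from Fin.ext hi, extf_zero, h0]
      · rw [show i = ⟨1, by omega⟩ from Fin.ext hi, extf_one, h1]
    · rw [extf_two _ _ hge, resf]
      congr 1
      simp only [Fin.ext_iff]
      have := i.isLt
      omega
  have hne2 : resf m f ⟨0, by omega⟩ ≠ 2 := by rw [resf]; exact h2
  refine ⟨⟨?_, ?_⟩, hne2, heq⟩
  · -- resf f is an rdf
    intro j hj
    obtain ⟨u, hadj, hu2⟩ := hf.1 ⟨j.val + 2, by have := j.isLt; omega⟩ hj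
    rw [adj_iff] at hadj
    simp only [Fin.val_mk] at hadj
    have hu1 : u.val ≠ 1 := by
      intro hu
      rw [show u = ⟨1, by omega⟩ from Fin.ext hu, h1] at hu2
      exact absurd hu2 (by decide)
    refine ⟨⟨u.val - 2, by have := u.isLt; omega⟩, ?_, ?_⟩
    · rw [adj_iff]
      simp only [Fin.val_mk]
      omega
    · rw [resf]
      convert hu2 using 2
      simp only [Fin.ext_iff, Fin.val_mk]
      omega
  · -- resf f is minimal
    intro g' hg' hle
    have hext : IsRDF (pathGraph (m+3)) (extf m g') := extf_rdf hg'
    have hextle : extf m g' ≤ f := by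
      intro i
      rcases Nat.lt_or_ge i.val 2 with hlt | hge
      · interval_cases hi : (i.val)
        · rw [show i = ⟨0, by omega⟩ from Fin.ext hi, extf_zero, h0]
        · rw [show i = ⟨1, by omega⟩ from Fin.ext hi, extf_one, h1]
      · rw [extf_two _ _ hge]
        have := hle ⟨i.val - 2, by have := i.isLt; omega⟩
        rw [resf] at this
        convert this using 2
        simp only [Fin.ext_iff]
        have := i.isLt
        omega
    have := hf.2 _ hext hextle
    calc g' = resf m (extf m g') := (resf_extf m g').symm
    _ = resf m f := by rw [this]

end CPaux

/-- For `n ≥ 3`, `C_{P,n} = C_{P,2̄,n} + C_{P,2̄,n-2}`. -/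
theorem CP_eq_CPbar2_add (n : ℕ) (hn : 3 ≤ n) :
    CP n = CPbar2 n + CPbar2 (n - 2) := by
  obtain ⟨m, rfl⟩ : ∃ m, n = m + 3 := ⟨n - 3, by omega⟩
  have hsub : m + 3 - 2 = m + 1 := by omega
  rw [hsub]
  set S : Set (Fin (m+3) → Fin 3) :=
    {f | IsMinimalRDF (SimpleGraph.pathGraph (m+3)) f} with hS
  set A : Set (Fin (m+3) → Fin 3) :=
    {f | IsMinimalRDF (SimpleGraph.pathGraph (m+3)) f ∧
      ∀ h : 0 < m + 3, f ⟨0, h⟩ ≠ 2} with hA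
  set B : Set (Fin (m+3) → Fin 3) :=
    {f | IsMinimalRDF (SimpleGraph.pathGraph (m+3)) f ∧ f ⟨0, by omega⟩ = 2} with hB
  set A' : Set (Fin (m+1) → Fin 3) :=
    {g | IsMinimalRDF (SimpleGraph.pathGraph (m+1)) g ∧
      ∀ h : 0 < m + 1, g ⟨0, h⟩ ≠ 2} with hA'
  have hSAB : S = A ∪ B := by
    ext f
    simp only [hS, hA, hB, Set.mem_setOf_eq, Set.mem_union]
    constructor
    · intro hf
      by_cases h2 : f ⟨0, by omega⟩ = 2
      · exact Or.inr ⟨hf, h2⟩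
      · exact Or.inl ⟨hf, fun _ => h2⟩
    · rintro (⟨hf, _⟩ | ⟨hf, _⟩) <;> exact hf
  have hdisj : Disjoint A B := by
    rw [Set.disjoint_left]
    rintro f ⟨_, hfa⟩ ⟨_, hfb⟩
    exact hfa (by omega) hfb
  have hBimg : B = CPaux.extf m '' A' := by
    ext f
    simp only [hB, hA', Set.mem_setOf_eq, Set.mem_image]
    constructor
    · rintro ⟨hf, h2⟩
      obtain ⟨hmin, hne, heq⟩ := CPaux.fwd hf h2
      exact ⟨CPaux.resf m f, ⟨hmin, fun _ => hne⟩, heq.symm⟩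
    · rintro ⟨g, ⟨hg, hne⟩, rfl⟩
      exact ⟨CPaux.bwd hg (hne (by omega)), CPaux.extf_zero m g⟩
  have hinj : Set.InjOn (CPaux.extf m) A' := by
    intro g₁ _ g₂ _ h
    have := congrArg (CPaux.resf m) h
    rwa [CPaux.resf_extf, CPaux.resf_extf] at this
  have hcard : B.ncard = A'.ncard := by
    rw [hBimg, Set.ncard_image_of_injOn hinj]
  have hCP : CP (m+3) = S.ncard := rfl
  have hCPbar : CPbar2 (m+3) = A.ncard := rfl
  have hCPbar' : CPbar2 (m+1) = A'.ncard := rfl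
  rw [hCP, hCPbar, hCPbar', hSAB, Set.ncard_union_eq hdisj (Set.toFinite A) (Set.toFinite B),
    hcard]
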